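/- Let σ > 0, K > 0 and r ∈ ℝ, and let u(τ,x) = x·N(d₁(τ,x)) − K·e^{−rτ}·N(d₂(τ,x)) be the Black–Scholes call price. Then for every x > 0, u(τ,x) tends to max(x − K, 0) as τ → 0⁺. -/

import Mathlib

/-- The standard normal cumulative distribution function. -/
noncomputable def stdNormalCdf (d : ℝ) : ℝ :=
  (Real.sqrt (2 * Real.pi))⁻¹ * ∫ y in Set.Iic d, Real.exp (-(y ^ 2) / 2)

noncomputable def d₁ (σ K r τ x : ℝ) : ℝ :=
  (Real.log (x / K) + (r + σ ^ 2 / 2) * τ) / (σ * Real.sqrt τ)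

noncomputable def d₂ (σ K r τ x : ℝ) : ℝ :=
  d₁ σ K r τ x - σ * Real.sqrt τ

/-- The Black–Scholes price of a European call option. -/
noncomputable def bsCall (σ K r τ x : ℝ) : ℝ :=
  x * stdNormalCdf (d₁ σ K r τ x) - K * Real.exp (-r * τ) * stdNormalCdf (d₂ σ K r τ x)

open MeasureTheory Filter Set Real Topology

lemma gauss_integrable : Integrable (fun y : ℝ => Real.exp (-(y ^ 2) / 2)) := by
  have h := integrable_exp_neg_mul_sq (show (0:ℝ) < 1/2 by norm_num)
  convert h using 2 with y
  ring_nf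

lemma gauss_total : (∫ y : ℝ, Real.exp (-(y ^ 2) / 2)) = Real.sqrt (2 * Real.pi) := by
  have h := integral_gaussian (1/2 : ℝ)
  rw [show π / (1/2 : ℝ) = 2 * π by ring] at h
  rw [← h]
  congr 1 with y
  ring_nf

lemma sqrt_two_pi_pos : 0 < Real.sqrt (2 * Real.pi) :=
  Real.sqrt_pos.2 (by positivity)

lemma cdf_atTop : Tendsto stdNormalCdf atTop (𝓝 1) := by
  have h : Tendsto (fun d : ℝ => ∫ y in Iic d, Real.exp (-(y ^ 2) / 2)) atTop
      (𝓝 (∫ y : ℝ, Real.exp (-(y ^ 2) / 2))) := by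
    have := tendsto_setIntegral_of_monotone (μ := volume)
      (s := fun d : ℝ => Iic d) (f := fun y : ℝ => Real.exp (-(y ^ 2) / 2))
      (fun d => measurableSet_Iic) (fun a b hab => Iic_subset_Iic.2 hab)
      (by rw [Set.iUnion_Iic]; exact gauss_integrable.integrableOn)
    rwa [Set.iUnion_Iic, Measure.restrict_univ] at this
  have := h.const_mul (Real.sqrt (2 * Real.pi))⁻¹
  rw [gauss_total, inv_mul_cancel₀ sqrt_two_pi_pos.ne'] at this
  exact this

lemma cdf_atBot : Tendsto stdNormalCdf atBot (𝓝 0) := by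
  have h : Tendsto (fun d : ℝ => ∫ y in Iic (-d), Real.exp (-(y ^ 2) / 2)) atTop (𝓝 0) := by
    have := tendsto_setIntegral_of_antitone (μ := volume)
      (s := fun d : ℝ => Iic (-d)) (f := fun y : ℝ => Real.exp (-(y ^ 2) / 2))
      (fun d => measurableSet_Iic)
      (fun a b hab => Iic_subset_Iic.2 (neg_le_neg hab))
      ⟨0, gauss_integrable.integrableOn⟩
    have hempty : (⋂ d : ℝ, Iic (-d)) = (∅ : Set ℝ) := by
      ext y
      simp only [mem_iInter, mem_Iic, mem_empty_iff_false, iff_false, not_forall, not_le]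
      exact ⟨1 - y, by linarith⟩
    rwa [hempty, Measure.restrict_empty, integral_zero_measure] at this
  have h2 : Tendsto (fun d : ℝ => stdNormalCdf (-d)) atTop (𝓝 0) := by
    have := h.const_mul (Real.sqrt (2 * Real.pi))⁻¹
    simpa [stdNormalCdf] using this
  have h3 := h2.comp tendsto_neg_atBot_atTop
  exact h3.congr fun d => by simp [Function.comp]

lemma cdf_continuous : Continuous stdNormalCdf := by
  have key : ∀ d : ℝ, stdNormalCdf d = (Real.sqrt (2 * Real.pi))⁻¹ *
      ((∫ y in Iic (0:ℝ), Real.exp (-(y ^ 2) / 2)) + ∫ y in (0:ℝ)..d, Real.exp (-(y ^ 2) / 2)) := by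
    intro d
    have h := intervalIntegral.integral_Iic_sub_Iic (μ := volume)
      (f := fun y : ℝ => Real.exp (-(y ^ 2) / 2)) (a := (0:ℝ)) (b := d)
      gauss_integrable.integrableOn gauss_integrable.integrableOn
    rw [stdNormalCdf]
    congr 1
    linarith
  rw [funext key]
  apply Continuous.mul continuous_const
  apply Continuous.add continuous_const
  exact intervalIntegral.continuous_primitive
    (fun a b => (Real.continuous_exp.comp (by continuity)).intervalIntegrable a b) 0

lemma cdf_zero : stdNormalCdf 0 = 1 / 2 := by
  have h : (∫ y in Iic (0:ℝ), Real.exp (-(y ^ 2) / 2)) = Real.sqrt (2 * Real.pi) / 2 := by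
    have hs : (∫ y in Iic (0:ℝ), Real.exp (-(y ^ 2) / 2))
        = ∫ y in Ioi (0:ℝ), Real.exp (-(y ^ 2) / 2) := by
      have h0 := integral_comp_neg_Iic (0:ℝ) (fun y => Real.exp (-(y ^ 2) / 2))
      simp only [neg_zero] at h0
      rw [← h0]
      congr 1 with y
      ring_nf
    have h2 := integral_gaussian_Ioi (1/2 : ℝ)
    rw [show π / (1/2 : ℝ) = 2 * π by ring] at h2
    rw [hs]
    rw [← h2]
    congr 1 with y
    ring_nf
  rw [stdNormalCdf, h]
  field_simp

lemma sqrt_tendsto_zero : Tendsto (fun τ : ℝ => Real.sqrt τ) (nhdsWithin 0 (Set.Ioi 0)) (𝓝 0) := by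
  have h : Tendsto (fun τ : ℝ => Real.sqrt τ) (𝓝 0) (𝓝 0) := by
    simpa using Real.continuous_sqrt.tendsto 0
  exact h.mono_left nhdsWithin_le_nhds

lemma sigma_sqrt_tendsto {σ : ℝ} (hσ : 0 < σ) :
    Tendsto (fun τ : ℝ => σ * Real.sqrt τ) (nhdsWithin 0 (Set.Ioi 0)) (nhdsWithin 0 (Set.Ioi 0)) := by
  rw [tendsto_nhdsWithin_iff]
  constructor
  · simpa using sqrt_tendsto_zero.const_mul σ
  · filter_upwards [self_mem_nhdsWithin] with τ hτ
    exact mul_pos hσ (Real.sqrt_pos.2 hτ)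

lemma d1_eq {σ K r x : ℝ} (hσ : 0 < σ) {τ : ℝ} (hτ : 0 < τ) :
    d₁ σ K r τ x = Real.log (x / K) * (σ * Real.sqrt τ)⁻¹
      + ((r + σ ^ 2 / 2) / σ) * Real.sqrt τ := by
  have hs : Real.sqrt τ * Real.sqrt τ = τ := Real.mul_self_sqrt hτ.le
  have hsp : 0 < Real.sqrt τ := Real.sqrt_pos.2 hτ
  rw [d₁]
  field_simp
  linear_combination (-(2 * r + σ ^ 2)) * hs

lemma d1_tendsto_atTop {σ K r x : ℝ} (hσ : 0 < σ) (hK : 0 < K) (hxK : K < x) :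
    Tendsto (fun τ : ℝ => d₁ σ K r τ x) (nhdsWithin 0 (Set.Ioi 0)) atTop := by
  have hL : 0 < Real.log (x / K) := Real.log_pos (by rw [lt_div_iff₀ hK]; linarith)
  have h1 : Tendsto (fun τ : ℝ => Real.log (x / K) * (σ * Real.sqrt τ)⁻¹)
      (nhdsWithin 0 (Set.Ioi 0)) atTop :=
    ((sigma_sqrt_tendsto hσ).inv_tendsto_nhdsGT_zero).const_mul_atTop hL
  have h2 : Tendsto (fun τ : ℝ => ((r + σ ^ 2 / 2) / σ) * Real.sqrt τ)
      (nhdsWithin 0 (Set.Ioi 0)) (𝓝 0) := by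
    simpa using sqrt_tendsto_zero.const_mul ((r + σ ^ 2 / 2) / σ)
  have h := h1.atTop_add h2
  apply h.congr'
  filter_upwards [self_mem_nhdsWithin] with τ hτ
  exact (d1_eq hσ hτ).symm

lemma d1_tendsto_atBot {σ K r x : ℝ} (hσ : 0 < σ) (hK : 0 < K) (hx : 0 < x) (hxK : x < K) :
    Tendsto (fun τ : ℝ => d₁ σ K r τ x) (nhdsWithin 0 (Set.Ioi 0)) atBot := by
  have hL : 0 < -Real.log (x / K) := by
    have : Real.log (x / K) < 0 := Real.log_neg (by positivity) (by rw [div_lt_one hK]; linarith)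
    linarith
  have h1 : Tendsto (fun τ : ℝ => -Real.log (x / K) * (σ * Real.sqrt τ)⁻¹)
      (nhdsWithin 0 (Set.Ioi 0)) atTop :=
    ((sigma_sqrt_tendsto hσ).inv_tendsto_nhdsGT_zero).const_mul_atTop hL
  have h2 : Tendsto (fun τ : ℝ => (-((r + σ ^ 2 / 2) / σ)) * Real.sqrt τ)
      (nhdsWithin 0 (Set.Ioi 0)) (𝓝 0) := by
    simpa using sqrt_tendsto_zero.const_mul (-((r + σ ^ 2 / 2) / σ))
  have h := (h1.atTop_add h2)
  rw [← tendsto_neg_atTop_iff]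
  apply h.congr'
  filter_upwards [self_mem_nhdsWithin] with τ hτ
  rw [d1_eq hσ hτ]
  ring

lemma d1_tendsto_zero {σ K r x : ℝ} (hσ : 0 < σ) (hK : 0 < K) (hxK : x = K) :
    Tendsto (fun τ : ℝ => d₁ σ K r τ x) (nhdsWithin 0 (Set.Ioi 0)) (𝓝 0) := by
  have hL : Real.log (x / K) = 0 := by rw [hxK, div_self hK.ne', Real.log_one]
  have h2 : Tendsto (fun τ : ℝ => ((r + σ ^ 2 / 2) / σ) * Real.sqrt τ)
      (nhdsWithin 0 (Set.Ioi 0)) (𝓝 0) := by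
    simpa using sqrt_tendsto_zero.const_mul ((r + σ ^ 2 / 2) / σ)
  apply h2.congr'
  filter_upwards [self_mem_nhdsWithin] with τ hτ
  rw [d1_eq hσ hτ, hL]
  ring

lemma d2_sub : ∀ σ K r τ x : ℝ, d₂ σ K r τ x = d₁ σ K r τ x - σ * Real.sqrt τ :=
  fun _ _ _ _ _ => rfl

lemma exp_tendsto (r : ℝ) :
    Tendsto (fun τ : ℝ => Real.exp (-r * τ)) (nhdsWithin 0 (Set.Ioi 0)) (𝓝 1) := by
  have hc : Continuous fun τ : ℝ => Real.exp (-r * τ) := by continuity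
  have h : Tendsto (fun τ : ℝ => Real.exp (-r * τ)) (𝓝 0) (𝓝 1) := by
    simpa using hc.tendsto 0
  exact h.mono_left nhdsWithin_le_nhds

/-- As time to maturity tends to zero from the right, the Black-Scholes call price tends
to the payoff `max (x - K) 0`. -/
theorem bsCall_tendsto_payoff (σ K r : ℝ) (hσ : 0 < σ) (hK : 0 < K)
    (x : ℝ) (hx : 0 < x) :
    Filter.Tendsto (fun τ : ℝ => bsCall σ K r τ x)
      (nhdsWithin 0 (Set.Ioi 0)) (nhds (max (x - K) 0)) := by
  have hσs : Tendsto (fun τ : ℝ => σ * Real.sqrt τ) (nhdsWithin 0 (Set.Ioi 0)) (𝓝 0) := by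
    simpa using sqrt_tendsto_zero.const_mul σ
  have hE := exp_tendsto r
  rcases lt_trichotomy x K with hxK | hxK | hxK
  · -- x < K : limit 0
    have hd1 := d1_tendsto_atBot (r := r) hσ hK hx hxK
    have hd2 : Tendsto (fun τ : ℝ => d₂ σ K r τ x) (nhdsWithin 0 (Set.Ioi 0)) atBot := by
      simpa [d₂, sub_eq_add_neg] using hd1.atBot_add hσs.neg
    have hF1 := cdf_atBot.comp hd1
    have hF2 := cdf_atBot.comp hd2
    have h := ((tendsto_const_nhds (x := x)).mul hF1).sub
      (((tendsto_const_nhds (x := K)).mul hE).mul hF2)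
    have hmax : max (x - K) 0 = 0 := max_eq_right (by linarith)
    rw [hmax]
    simpa [bsCall, Function.comp] using h
  · -- x = K : limit 0
    have hd1 := d1_tendsto_zero (r := r) hσ hK hxK
    have hd2 : Tendsto (fun τ : ℝ => d₂ σ K r τ x) (nhdsWithin 0 (Set.Ioi 0)) (𝓝 0) := by
      simpa [d₂] using hd1.sub hσs
    have hF1 := (cdf_continuous.tendsto 0).comp hd1
    have hF2 := (cdf_continuous.tendsto 0).comp hd2
    have h := ((tendsto_const_nhds (x := x)).mul hF1).sub
      (((tendsto_const_nhds (x := K)).mul hE).mul hF2)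
    have hmax : max (x - K) 0 = 0 := max_eq_right (by linarith)
    have h' : Tendsto (fun τ : ℝ => bsCall σ K r τ x) (nhdsWithin 0 (Set.Ioi 0))
        (𝓝 (x * stdNormalCdf 0 - K * stdNormalCdf 0)) := by
      simpa [bsCall, Function.comp] using h
    rw [hmax]
    convert h' using 2
    rw [hxK]; ring
  · -- K < x : limit x - K
    have hd1 := d1_tendsto_atTop (r := r) hσ hK hxK
    have hd2 : Tendsto (fun τ : ℝ => d₂ σ K r τ x) (nhdsWithin 0 (Set.Ioi 0)) atTop := by
      simpa [d₂, sub_eq_add_neg] using hd1.atTop_add hσs.neg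
    have hF1 := cdf_atTop.comp hd1
    have hF2 := cdf_atTop.comp hd2
    have h := ((tendsto_const_nhds (x := x)).mul hF1).sub
      (((tendsto_const_nhds (x := K)).mul hE).mul hF2)
    have hmax : max (x - K) 0 = x - K := max_eq_left (by linarith)
    have h' : Tendsto (fun τ : ℝ => bsCall σ K r τ x) (nhdsWithin 0 (Set.Ioi 0))
        (𝓝 (x * 1 - K * 1 * 1)) := by
      simpa [bsCall, Function.comp] using h
    rw [hmax]
    convert h' using 2
    ring
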